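/- Let N ∈ {3, 4, 5}. There exists a constant C > 0 such that for all real numbers k, l: |F(k+l) − F(k) − f(k)l − (1/2) f'(k) l²| ≤ C (|k|^{(6−N)/(N−2)} |l|³ + |l|^{2N/(N−2)}), where F(u) = ((N−2)/(2N))|u|^{2N/(N−2)}, f(u) = |u|^{4/(N−2)}u and f'(u) = ((N+2)/(N−2))|u|^{4/(N−2)}. -/

import Mathlib

open Real

noncomputable def Fnl (N : ℕ) (u : ℝ) : ℝ :=
  (((N : ℝ) - 2) / (2 * (N : ℝ))) * |u| ^ (2 * (N : ℝ) / ((N : ℝ) - 2))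

noncomputable def fnl (N : ℕ) (u : ℝ) : ℝ :=
  |u| ^ ((4 : ℝ) / ((N : ℝ) - 2)) * u

noncomputable def fprime (N : ℕ) (u : ℝ) : ℝ :=
  (((N : ℝ) + 2) / ((N : ℝ) - 2)) * |u| ^ ((4 : ℝ) / ((N : ℝ) - 2))


lemma myDeriv_mul {q : ℝ} (hq : 1 < q) (x : ℝ) :
    HasDerivAt (fun u : ℝ => |u| ^ q * u) ((q + 1) * |x| ^ q) x := by
  have H := (hasDerivAt_abs_rpow x hq).mul (hasDerivAt_id x)
  refine H.congr_deriv ?_; symm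
  rcases eq_or_ne x 0 with rfl | hx
  · simp [Real.zero_rpow (by linarith : q ≠ 0)]
  · have habs : (0:ℝ) < |x| := abs_pos.mpr hx
    have h1 : |x| ^ (q-2) * x * x = |x| ^ q := by
      have : x * x = |x| * |x| := by rw [abs_mul_abs_self]
      rw [mul_assoc, this, ← mul_assoc, ← Real.rpow_add_one habs.ne', ← Real.rpow_add_one habs.ne']
      ring_nf
    calc (q + 1) * |x| ^ q = q * (|x| ^ (q-2) * x * x) + |x| ^ q := by rw [h1]; ring
    _ = q * |x| ^ (q - 2) * x * id x + |x| ^ q * 1 := by simp [id]; ring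

-- the P function (analogue of fprime) is Lipschitz-type
lemma key (q : ℝ) (hq : 1 < q) (k l : ℝ) :
    |(1/(q+2)) * |k+l| ^ (q+2) - (1/(q+2)) * |k| ^ (q+2)
      - |k| ^ q * k * l - (1/2) * ((q+1) * |k| ^ q) * l^2|
    ≤ ((q+1) * q * (|k| + |l|) ^ (q-1)) * |l| ^ 3 := by
  set B : ℝ := (q+1) * q * (|k| + |l|) ^ (q-1) with hB
  have hBnn : 0 ≤ B := by positivity
  set P : ℝ → ℝ := fun u => (q+1) * |u| ^ q with hP
  set φ : ℝ → ℝ := fun u => |u| ^ q * u with hφ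
  set Φ : ℝ → ℝ := fun u => (1/(q+2)) * |u| ^ (q+2) with hΦ
  -- derivatives
  have hΦ' : ∀ x : ℝ, HasDerivAt Φ (φ x) x := by
    intro x
    have h := (hasDerivAt_abs_rpow x (by linarith : (1:ℝ) < q + 2)).const_mul (1/(q+2))
    refine h.congr_deriv ?_; symm
    have : q + 2 - 2 = q := by ring
    rw [this]
    field_simp [hφ]
    ring
  have hφ' : ∀ x : ℝ, HasDerivAt φ (P x) x := fun x => myDeriv_mul hq x
  have hP' : ∀ x : ℝ, HasDerivAt P ((q+1) * (q * |x| ^ (q-2) * x)) x :=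
    fun x => (hasDerivAt_abs_rpow x hq).const_mul (q+1)
  -- bound on P-derivative on the interval s
  set s : Set ℝ := Set.Icc (k - |l|) (k + |l|) with hs
  have hks : k ∈ s := by
    constructor <;> [linarith [abs_nonneg l]; linarith [abs_nonneg l]]
  have hmem : ∀ t : ℝ, |t| ≤ |l| → k + t ∈ s := by
    intro t ht
    rcases abs_le.mp ht with ⟨h1, h2⟩
    constructor <;> linarith
  have habs_bd : ∀ x ∈ s, |x| ≤ |k| + |l| := by
    intro x hx
    rcases hx with ⟨h1, h2⟩
    rw [abs_le]
    constructor
    · linarith [neg_abs_le k]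
    · linarith [le_abs_self k]
  have hPbd : ∀ x ∈ s, ‖(q+1) * (q * |x| ^ (q-2) * x)‖ ≤ B := by
    intro x hx
    rcases eq_or_ne x 0 with rfl | hne
    · simp [hBnn]
    · have habs : (0:ℝ) < |x| := abs_pos.mpr hne
      have : ‖(q+1) * (q * |x| ^ (q-2) * x)‖ = (q+1) * q * |x| ^ (q-1) := by
        rw [Real.norm_eq_abs, abs_mul, abs_mul, abs_mul,
          abs_of_nonneg (by linarith : (0:ℝ) ≤ q + 1), abs_of_nonneg (by linarith : (0:ℝ) ≤ q),
          abs_of_nonneg (Real.rpow_nonneg (abs_nonneg x) _)]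
        rw [show q - 1 = q - 2 + 1 by ring, Real.rpow_add_one habs.ne']
        ring
      rw [this, hB]
      have hle : |x| ^ (q-1) ≤ (|k| + |l|) ^ (q-1) :=
        Real.rpow_le_rpow (abs_nonneg x) (habs_bd x hx) (by linarith)
      have : (0:ℝ) ≤ (q+1) * q := by positivity
      nlinarith [Real.rpow_nonneg (abs_nonneg x) (q-1)]
  -- Step 1: |P (k+t) - P k| ≤ B * |l| for |t| ≤ |l|
  have step1 : ∀ t : ℝ, |t| ≤ |l| → |P (k + t) - P k| ≤ B * |l| := by
    intro t ht
    have := Convex.norm_image_sub_le_of_norm_hasDerivWithin_le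
      (fun x hx => (hP' x).hasDerivWithinAt) hPbd (convex_Icc _ _) hks (hmem t ht)
    rw [Real.norm_eq_abs] at this
    calc |P (k + t) - P k| ≤ B * ‖k + t - k‖ := this
    _ = B * |t| := by rw [Real.norm_eq_abs]; ring_nf
    _ ≤ B * |l| := by exact mul_le_mul_of_nonneg_left ht hBnn
  -- Step 2: h t := φ(k+t) - φ k - P k * t;  |h t| ≤ B|l| * |t|
  set h : ℝ → ℝ := fun t => φ (k + t) - φ k - P k * t with hh
  have hh' : ∀ t : ℝ, HasDerivAt h (P (k + t) - P k) t := by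
    intro t
    have h1 : HasDerivAt (fun t : ℝ => φ (k + t)) (P (k + t)) t := by
      have := (hφ' (k + t)).comp t ((hasDerivAt_id t).const_add k)
      rw [mul_one] at this; exact this
    have h2 : HasDerivAt (fun t : ℝ => P k * t) (P k) t := by
      simpa using (hasDerivAt_id t).const_mul (P k)
    exact (h1.sub_const (φ k)).sub h2
  have step2 : ∀ t : ℝ, |t| ≤ |l| → |h t| ≤ (B * |l|) * |t| := by
    intro t ht
    set s2 : Set ℝ := Set.Icc (-|l|) (|l|) with hs2
    have h0s : (0:ℝ) ∈ s2 := ⟨by linarith [abs_nonneg l], abs_nonneg l⟩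
    have hts : t ∈ s2 := abs_le.mp ht
    have hbd : ∀ x ∈ s2, ‖P (k + x) - P k‖ ≤ B * |l| := by
      intro x hx
      rw [Real.norm_eq_abs]
      exact step1 x (abs_le.mpr hx)
    have := Convex.norm_image_sub_le_of_norm_hasDerivWithin_le
      (fun x _ => (hh' x).hasDerivWithinAt) hbd (convex_Icc _ _) h0s hts
    rw [Real.norm_eq_abs, Real.norm_eq_abs] at this
    simpa [hh] using this
  -- Step 3
  set g : ℝ → ℝ := fun t => Φ (k + t) - Φ k - φ k * t - (1/2) * P k * t^2 with hg
  have hg' : ∀ t : ℝ, HasDerivAt g (h t) t := by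
    intro t
    have h1 : HasDerivAt (fun t : ℝ => Φ (k + t)) (φ (k + t)) t := by
      have := (hΦ' (k + t)).comp t ((hasDerivAt_id t).const_add k)
      rw [mul_one] at this; exact this
    have h2 : HasDerivAt (fun t : ℝ => φ k * t) (φ k) t := by
      simpa using (hasDerivAt_id t).const_mul (φ k)
    have h3 : HasDerivAt (fun t : ℝ => (1/2) * P k * t^2) ((1/2) * P k * (2 * t)) t := by
      simpa using (hasDerivAt_pow 2 t).const_mul ((1/2) * P k)
    have := ((h1.sub_const (Φ k)).sub h2).sub h3
    refine this.congr_deriv ?_; symm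
    simp [hh]; ring
  have step3 : |g l| ≤ (B * |l| * |l|) * |l| := by
    set s2 : Set ℝ := Set.Icc (-|l|) (|l|) with hs2
    have h0s : (0:ℝ) ∈ s2 := ⟨by linarith [abs_nonneg l], abs_nonneg l⟩
    have hls : l ∈ s2 := abs_le.mp le_rfl
    have hbd : ∀ x ∈ s2, ‖h x‖ ≤ B * |l| * |l| := by
      intro x hx
      rw [Real.norm_eq_abs]
      have hx' : |x| ≤ |l| := abs_le.mpr hx
      calc |h x| ≤ (B * |l|) * |x| := step2 x hx'
      _ ≤ B * |l| * |l| := by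
        apply mul_le_mul_of_nonneg_left hx'
        positivity
    have := Convex.norm_image_sub_le_of_norm_hasDerivWithin_le
      (fun x _ => (hg' x).hasDerivWithinAt) hbd (convex_Icc _ _) h0s hls
    rw [Real.norm_eq_abs, Real.norm_eq_abs] at this
    simpa [hg] using this
  calc |(1/(q+2)) * |k+l| ^ (q+2) - (1/(q+2)) * |k| ^ (q+2)
      - |k| ^ q * k * l - (1/2) * ((q+1) * |k| ^ q) * l^2| = |g l| := by
        simp only [hg, hΦ, hφ, hP]
  _ ≤ (B * |l| * |l|) * |l| := step3
  _ = B * |l| ^ 3 := by ring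

lemma key2 (q : ℝ) (hq : 1 < q) (k l : ℝ) :
    |(1/(q+2)) * |k+l| ^ (q+2) - (1/(q+2)) * |k| ^ (q+2)
      - |k| ^ q * k * l - (1/2) * ((q+1) * |k| ^ q) * l^2|
    ≤ ((q+1) * q * 2^(q-1)) * (|k| ^ (q-1) * |l| ^ 3 + |l| ^ (q+2)) := by
  refine (key q hq k l).trans ?_
  have hq1 : (0:ℝ) ≤ q - 1 := by linarith
  have h1 : (|k| + |l|) ^ (q-1) ≤ 2^(q-1) * (|k|^(q-1) + |l|^(q-1)) := by
    have hmax : |k| + |l| ≤ 2 * max |k| |l| := by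
      have := le_max_left |k| |l|
      have := le_max_right |k| |l|
      linarith
    have hmn : (0:ℝ) ≤ max |k| |l| := le_trans (abs_nonneg k) (le_max_left _ _)
    calc (|k| + |l|) ^ (q-1) ≤ (2 * max |k| |l|) ^ (q-1) :=
          Real.rpow_le_rpow (by positivity) hmax hq1
    _ = 2^(q-1) * (max |k| |l|)^(q-1) := Real.mul_rpow (by norm_num) hmn
    _ ≤ 2^(q-1) * (|k|^(q-1) + |l|^(q-1)) := by
        apply mul_le_mul_of_nonneg_left _ (by positivity)
        rcases le_total |k| |l| with h | h
        · rw [max_eq_right h]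
          exact le_add_of_nonneg_left (Real.rpow_nonneg (abs_nonneg k) _)
        · rw [max_eq_left h]
          exact le_add_of_nonneg_right (Real.rpow_nonneg (abs_nonneg l) _)
  rcases eq_or_ne l 0 with rfl | hl
  · simp only [abs_zero]
    norm_num
    positivity
  · have hl' : (0:ℝ) < |l| := abs_pos.mpr hl
    have h2 : |l|^(q-1) * |l| ^ (3:ℕ) = |l| ^ (q+2) := by
      rw [← Real.rpow_natCast |l| 3, ← Real.rpow_add hl']
      norm_num
      congr 1
      ring
    have h3 : (0:ℝ) ≤ |l| ^ (3:ℕ) := by positivity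
    have h4 : (0:ℝ) ≤ (q+1) * q := by positivity
    calc (q+1) * q * (|k| + |l|) ^ (q-1) * |l| ^ 3
        ≤ (q+1) * q * (2^(q-1) * (|k|^(q-1) + |l|^(q-1))) * |l| ^ 3 := by
          apply mul_le_mul_of_nonneg_right _ h3
          exact mul_le_mul_of_nonneg_left h1 h4
    _ = ((q+1) * q * 2^(q-1)) * (|k| ^ (q-1) * |l| ^ 3 + |l|^(q-1) * |l| ^ 3) := by ring
    _ = ((q+1) * q * 2^(q-1)) * (|k| ^ (q-1) * |l| ^ 3 + |l| ^ (q+2)) := by rw [h2]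


theorem F_taylor_lowdim (N : ℕ) (hN : N = 3 ∨ N = 4 ∨ N = 5) :
    ∃ C > (0 : ℝ), ∀ k l : ℝ,
      |Fnl N (k + l) - Fnl N k - fnl N k * l - (1 / 2) * fprime N k * l ^ 2| ≤
        C * (|k| ^ (((6 : ℝ) - N) / ((N : ℝ) - 2)) * |l| ^ 3 +
          |l| ^ (2 * (N : ℝ) / ((N : ℝ) - 2))) := by
  simp only [Fnl, fnl, fprime]
  rcases hN with rfl | rfl | rfl
  · refine ⟨(4+1) * 4 * 2^((4:ℝ)-1), by positivity, fun k l => ?_⟩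
    have h := key2 4 (by norm_num) k l
    norm_num at h ⊢
    convert h using 3 <;> norm_num
  · refine ⟨(2+1) * 2 * 2^((2:ℝ)-1), by positivity, fun k l => ?_⟩
    have h := key2 2 (by norm_num) k l
    norm_num at h ⊢
    convert h using 3 <;> norm_num
  · refine ⟨(4/3+1) * (4/3) * 2^((4:ℝ)/3-1), by positivity, fun k l => ?_⟩
    have h := key2 (4/3) (by norm_num) k l
    norm_num at h ⊢
    convert h using 3 <;> norm_num
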